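/- Let G be a finitely generated group with finitely generated subgroups H_1,…,H_n, and for i = 1,…,n let X_i be a nontrivial H_i-almost invariant subset of G. Suppose the family X_1,…,X_n is in good position. Then the relation ≤ is a partial order on E = E(X_1,…,X_n): it is reflexive, antisymmetric (U ≤ V and V ≤ U imply U = V), and transitive. -/

import Mathlib

open Pointwise

universe u v

section Defs

variable {G : Type v} [Group G]

/-- `W` is `H`-finite: `W` is contained in the union of finitely many left cosets of `H`. -/
def HFin (H : Subgroup G) (W : Set G) : Prop :=
  ∃ F : Finset G, W ⊆ (H : Set G) * (F : Set G)

/-- `X` is an `H`-almost invariant subset of `G`: `HX = X` and for every `a : G`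
the symmetric difference of `X` and `Xa` is `H`-finite. -/
def AlmostInv (H : Subgroup G) (X : Set G) : Prop :=
  (∀ h ∈ H, h • X = X) ∧
    ∀ a : G, HFin H ((X \ (· * a) '' X) ∪ ((· * a) '' X \ X))

/-- `X` is a nontrivial `H`-almost invariant subset of `G`. -/
def NontrivAI (H : Subgroup G) (X : Set G) : Prop :=
  AlmostInv H X ∧ ¬ HFin H X ∧ ¬ HFin H Xᶜ

/-- `X ~ Y` : the symmetric difference of `X` and `Y` is `H`-finite. -/
def AIEquiv (H : Subgroup G) (X Y : Set G) : Prop :=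
  HFin H ((X \ Y) ∪ (Y \ X))

/-- `H` and `K` are commensurable: `H ⊓ K` has finite index in both `H` and `K`. -/
def CommSub (H K : Subgroup G) : Prop :=
  ((H ⊓ K).subgroupOf H).index ≠ 0 ∧ ((H ⊓ K).subgroupOf K).index ≠ 0

/-- `E(X₁,…,Xₙ)`: the set of all translates of the `Xᵢ` and of their complements. -/
def ESet {ι : Type*} (X : ι → Set G) : Set (Set G) :=
  {A | ∃ (i : ι) (g : G), A = g • X i ∨ A = (g • X i)ᶜ}

/-- `W` is small with respect to `U ∈ E`: `W` is `gHᵢg⁻¹`-finite, where `U = gXᵢ` or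
`U = (gXᵢ)ᶜ` (so that `U` is almost invariant over `gHᵢg⁻¹`). -/
def SmallFor {ι : Type*} (H : ι → Subgroup G) (X : ι → Set G) (U W : Set G) : Prop :=
  ∃ (i : ι) (g : G), (U = g • X i ∨ U = (g • X i)ᶜ) ∧ HFin (H i) (g⁻¹ • W)

/-- Condition (*) (good position): if two of the four corners of a pair of elements
of `E` are small, then one of the four corners is empty. -/
def GoodPos {ι : Type*} (H : ι → Subgroup G) (X : ι → Set G) : Prop :=
  ∀ U ∈ ESet X, ∀ V ∈ ESet X, ∀ p q : Fin 4, p ≠ q →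
    SmallFor H X U (![U ∩ V, U ∩ Vᶜ, Uᶜ ∩ V, Uᶜ ∩ Vᶜ] p) →
    SmallFor H X U (![U ∩ V, U ∩ Vᶜ, Uᶜ ∩ V, Uᶜ ∩ Vᶜ] q) →
    U ∩ V = ∅ ∨ U ∩ Vᶜ = ∅ ∨ Uᶜ ∩ V = ∅ ∨ Uᶜ ∩ Vᶜ = ∅

/-- Almost inclusion: `U ≤ V` iff `U ∩ Vᶜ` is empty or is the only small corner
among the four corners of `(U, V)`. -/
def LeE {ι : Type*} (H : ι → Subgroup G) (X : ι → Set G) (U V : Set G) : Prop :=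
  U ∩ Vᶜ = ∅ ∨
    (SmallFor H X U (U ∩ Vᶜ) ∧ ¬ SmallFor H X U (U ∩ V) ∧
      ¬ SmallFor H X U (Uᶜ ∩ V) ∧ ¬ SmallFor H X U (Uᶜ ∩ Vᶜ))

/-- `E(Y)` for a single almost invariant set. -/
def ESet1 (Y : Set G) : Set (Set G) := ESet (fun _ : Unit => Y)

def SmallFor1 (K : Subgroup G) (Y : Set G) (U W : Set G) : Prop :=
  SmallFor (fun _ : Unit => K) (fun _ : Unit => Y) U W

def GoodPos1 (K : Subgroup G) (Y : Set G) : Prop :=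
  GoodPos (fun _ : Unit => K) (fun _ : Unit => Y)

def LeE1 (K : Subgroup G) (Y : Set G) (U V : Set G) : Prop :=
  LeE (fun _ : Unit => K) (fun _ : Unit => Y) U V

/-- `Y` is invertible: some `g ∈ G` satisfies `gY = Y*`. -/
def InvertibleSet (Y : Set G) : Prop := ∃ g : G, g • Y = Yᶜ

/-- There is a `G`-equivariant bijection `E(Y₁) → E(Y₂)` preserving complementation,
the partial order of almost inclusion, and equivalence classes. -/
def GoodBij (K₁ : Subgroup G) (Y₁ : Set G) (K₂ : Subgroup G) (Y₂ : Set G) : Prop :=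
  ∃ φ : Set G → Set G,
    Set.BijOn φ (ESet1 Y₁) (ESet1 Y₂) ∧
    (∀ (g : G), ∀ U ∈ ESet1 Y₁, φ (g • U) = g • φ U) ∧
    (∀ U ∈ ESet1 Y₁, ∀ V ∈ ESet1 Y₁, LeE1 K₁ Y₁ U V → LeE1 K₂ Y₂ (φ U) (φ V)) ∧
    (∀ U ∈ ESet1 Y₁, φ Uᶜ = (φ U)ᶜ) ∧
    (∀ U ∈ ESet1 Y₁, SmallFor1 K₁ Y₁ U ((U \ φ U) ∪ (φ U \ U)))

/-- `x` lies in the ball of radius `R` about `g` in the word metric determined by `S`. -/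
def InBall (S : Finset G) (R : ℕ) (g x : G) : Prop :=
  ∃ l : List G, (∀ s ∈ l, s ∈ S ∨ s⁻¹ ∈ S) ∧ l.length ≤ R ∧ x = g * l.prod

/-- Some edge of the Cayley graph of `(G,S)` with one endpoint in `A` and the other in
`Aᶜ` has an endpoint in the ball `N_R(g)`. -/
def BNear (S : Finset G) (R : ℕ) (g : G) (A : Set G) : Prop :=
  ∃ x s : G, (s ∈ S ∨ s⁻¹ ∈ S) ∧
    ((x ∈ A ∧ x * s ∉ A) ∨ (x ∉ A ∧ x * s ∈ A)) ∧
    (InBall S R g x ∨ InBall S R g (x * s))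

/-- `E_R* = E − E_R`: the elements of `E` no edge of whose coboundary meets `N_R(g)`. -/
def ERstar (S : Finset G) (R : ℕ) (g : G) {ι : Type*} (X : ι → Set G) : Set (Set G) :=
  {A | A ∈ ESet X ∧ ¬ BNear S R g A}

/-- `U_g = {A ∈ E_R* : g ∈ A}`. -/
def UgSet (S : Finset G) (R : ℕ) (g : G) {ι : Type*} (X : ι → Set G) : Set (Set G) :=
  {A | A ∈ ERstar S R g X ∧ g ∈ A}

/-- `U₁ = U_g ∪ {B ∈ E_R : ∃ A ∈ U_g, A ≤ B}`. -/
def U1Set {ι : Type*} (H : ι → Subgroup G) (S : Finset G) (R : ℕ) (g : G) (X : ι → Set G) :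
    Set (Set G) :=
  UgSet S R g X ∪
    {B | (B ∈ ESet X ∧ BNear S R g B) ∧ ∃ A ∈ UgSet S R g X, LeE H X A B}

/-- `V₁ = E − (U₁ ∪ U₁*)`. -/
def V1Set {ι : Type*} (H : ι → Subgroup G) (S : Finset G) (R : ℕ) (g : G) (X : ι → Set G) :
    Set (Set G) :=
  ESet X \ (U1Set H S R g X ∪ (fun B : Set G => Bᶜ) '' U1Set H S R g X)

/-- `U₂ = U₁ ∪ {A₁} ∪ {B ∈ V₁ : A₁ ≤ B}`. -/
def U2Set {ι : Type*} (H : ι → Subgroup G) (S : Finset G) (R : ℕ) (g : G) (X : ι → Set G)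
    (A₁ : Set G) : Set (Set G) :=
  U1Set H S R g X ∪ {A₁} ∪ {B | B ∈ V1Set H S R g X ∧ LeE H X A₁ B}

/-- `G` is (canonically isomorphic to) the amalgamated free product `A *_C B` of its
subgroups `A` and `B` over `C`, expressed via the universal property of the pushout. -/
def IsAmalgam (C A B : Subgroup G) : Prop :=
  C ≤ A ∧ C ≤ B ∧
    ∀ (P : Type u) [Group P] (f : ↥A →* P) (g : ↥B →* P),
      (∀ (c : G) (hcA : c ∈ A) (hcB : c ∈ B), c ∈ C → f ⟨c, hcA⟩ = g ⟨c, hcB⟩) →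
      ∃! h : G →* P, (∀ (a : G) (ha : a ∈ A), h a = f ⟨a, ha⟩) ∧
        (∀ (b : G) (hb : b ∈ B), h b = g ⟨b, hb⟩)

/-- `G` is (canonically isomorphic to) an HNN extension with associated subgroup `C`:
there are a base subgroup `K`, associated subgroups `C, D ≤ K`, an isomorphism
`φ : C ≃ D` and a stable letter `t` conjugating `C` to `D` via `φ`, such that `G` has
the universal property of the HNN extension. -/
def IsHNNOver (C : Subgroup G) : Prop :=
  ∃ (K D : Subgroup G) (t : G) (φ : ↥C ≃* ↥D),
    C ≤ K ∧ D ≤ K ∧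
    (∀ c : ↥C, t⁻¹ * (c : G) * t = ((φ c : ↥D) : G)) ∧
    ∀ (P : Type u) [Group P] (f : ↥K →* P) (p : P),
      (∀ (c : ↥C) (hc : (c : G) ∈ K) (hc' : ((φ c : ↥D) : G) ∈ K),
        p⁻¹ * f ⟨(c : G), hc⟩ * p = f ⟨((φ c : ↥D) : G), hc'⟩) →
      ∃! h : G →* P, (∀ (k : G) (hk : k ∈ K), h k = f ⟨k, hk⟩) ∧ h t = p

/-- `G` splits over `C`: `G` is an amalgamated free product `A *_C B` in which `C` is a
proper subgroup of both `A` and `B`, or an HNN extension with associated subgroup `C`. -/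
def SplitsOver (C : Subgroup G) : Prop :=
  (∃ A B : Subgroup G, C ≠ A ∧ C ≠ B ∧ IsAmalgam.{u} C A B) ∨ IsHNNOver.{u} C

end Defs

open Set

section Aux
variable {G : Type*} [Group G]

theorem hfin_mono {H : Subgroup G} {W W' : Set G} (hsub : W' ⊆ W) : HFin H W → HFin H W'
  | ⟨F, hF⟩ => ⟨F, hsub.trans hF⟩

theorem hfin_empty (H : Subgroup G) : HFin H (∅ : Set G) := ⟨∅, by simp⟩

theorem hfin_union {H : Subgroup G} {A B : Set G} (hA : HFin H A) (hB : HFin H B) :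
    HFin H (A ∪ B) := by
  classical
  obtain ⟨F₁, h₁⟩ := hA; obtain ⟨F₂, h₂⟩ := hB
  refine ⟨F₁ ∪ F₂, union_subset (h₁.trans ?_) (h₂.trans ?_)⟩ <;>
    apply mul_subset_mul_left
  · rw [Finset.coe_union]; exact subset_union_left
  · rw [Finset.coe_union]; exact subset_union_right

def cj (c : G) (H : Subgroup G) : Subgroup G where
  carrier := {x | c⁻¹ * x * c ∈ H}
  one_mem' := by simpa using H.one_mem
  mul_mem' := by
    intro a b ha hb
    have e : c⁻¹ * (a * b) * c = (c⁻¹ * a * c) * (c⁻¹ * b * c) := by group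
    show c⁻¹ * (a * b) * c ∈ H
    rw [e]; exact H.mul_mem ha hb
  inv_mem' := by
    intro a ha
    have e : c⁻¹ * a⁻¹ * c = (c⁻¹ * a * c)⁻¹ := by group
    show c⁻¹ * a⁻¹ * c ∈ H
    rw [e]; exact H.inv_mem ha

theorem mem_cj {c x : G} {H : Subgroup G} : x ∈ cj c H ↔ c⁻¹ * x * c ∈ H := Iff.rfl

theorem smul_set_compl' (a : G) (s : Set G) : a • sᶜ = (a • s)ᶜ := by
  ext x; simp [Set.mem_smul_set_iff_inv_smul_mem]

theorem smul_set_diff' (a : G) (s t : Set G) : a • (s \ t) = a • s \ a • t := by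
  ext x; simp [Set.mem_smul_set_iff_inv_smul_mem, Set.mem_diff]

theorem hfin_cj_iff (g : G) {H : Subgroup G} {W : Set G} :
    HFin (cj g H) W ↔ HFin H (g⁻¹ • W) := by
  classical
  constructor
  · rintro ⟨F, hF⟩
    refine ⟨F.image (g⁻¹ * ·), ?_⟩
    rintro x ⟨w, hw, rfl⟩
    obtain ⟨k, hk, f, hf, rfl⟩ := hF hw
    refine ⟨g⁻¹ * k * g, hk, g⁻¹ * f, by rw [Finset.coe_image]; exact Set.mem_image_of_mem _ hf, ?_⟩
    show g⁻¹ * k * g * (g⁻¹ * f) = g⁻¹ • (k * f)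
    rw [smul_eq_mul]; group
  · rintro ⟨F, hF⟩
    refine ⟨F.image (g * ·), ?_⟩
    intro w hw
    have hmem : g⁻¹ * w ∈ g⁻¹ • W := ⟨w, hw, rfl⟩
    obtain ⟨h, hh, f, hf, he⟩ := hF hmem
    have he' : h * f = g⁻¹ * w := he
    refine ⟨g * h * g⁻¹, ?_, g * f, by rw [Finset.coe_image]; exact Set.mem_image_of_mem _ hf, ?_⟩
    · show g⁻¹ * (g * h * g⁻¹) * g ∈ H
      have e : g⁻¹ * (g * h * g⁻¹) * g = h := by group
      rw [e]; exact hh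
    · show g * h * g⁻¹ * (g * f) = w
      have : g * (h * f) = w := by rw [he']; group
      rw [← this]; group
end Aux

section Aux2
variable {G : Type*} [Group G]

theorem img_mul_compl (a : G) (X : Set G) : (· * a) '' Xᶜ = ((· * a) '' X)ᶜ :=
  Set.image_compl_eq (Equiv.mulRight a).bijective

theorem ai_compl {H : Subgroup G} {X : Set G} (h : AlmostInv H X) : AlmostInv H Xᶜ := by
  constructor
  · intro g hg
    rw [smul_set_compl', h.1 g hg]
  · intro a
    rw [img_mul_compl]
    have e1 : Xᶜ \ ((· * a) '' X)ᶜ = (· * a) '' X \ X := by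
      rw [Set.diff_compl]; rw [Set.diff_eq, Set.inter_comm]
    have e2 : ((· * a) '' X)ᶜ \ Xᶜ = X \ (· * a) '' X := by
      rw [Set.diff_eq, compl_compl, Set.inter_comm, ← Set.diff_eq]
    rw [e1, e2, Set.union_comm]
    exact h.2 a

theorem img_mul_smul (a c : G) (X : Set G) : (· * a) '' (c • X) = c • ((· * a) '' X) := by
  ext x
  constructor
  · rintro ⟨y, ⟨z, hz, rfl⟩, rfl⟩
    refine ⟨z * a, ⟨z, hz, rfl⟩, ?_⟩
    show c * (z * a) = (c • z) * a
    rw [smul_eq_mul]; group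
  · rintro ⟨y, ⟨z, hz, rfl⟩, rfl⟩
    refine ⟨c • z, ⟨z, hz, rfl⟩, ?_⟩
    show (c • z) * a = c • (z * a)
    rw [smul_eq_mul, smul_eq_mul]; group

theorem ai_conj {H : Subgroup G} {X : Set G} (h : AlmostInv H X) (c : G) :
    AlmostInv (cj c H) (c • X) := by
  constructor
  · intro g hg
    have hk : c⁻¹ * g * c ∈ H := hg
    rw [smul_smul]
    have e : g * c = c * (c⁻¹ * g * c) := by group
    rw [e, ← smul_smul, h.1 _ hk]
  · intro a
    rw [img_mul_smul, ← smul_set_diff', ← smul_set_diff', ← Set.smul_set_union]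
    rw [hfin_cj_iff, inv_smul_smul]
    exact h.2 a

theorem ai_of_rep {H : Subgroup G} {X0 V : Set G} (hai : AlmostInv H X0) {g : G}
    (hrep : V = g • X0 ∨ V = (g • X0)ᶜ) : AlmostInv (cj g H) V := by
  rcases hrep with rfl | rfl
  · exact ai_conj hai g
  · exact ai_compl (ai_conj hai g)
end Aux2

section Ball
variable {G : Type*} [Group G]

def OkL (S : Set G) (l : List G) : Prop := ∀ s ∈ l, s ∈ S ∨ s⁻¹ ∈ S

def Ball (S : Set G) (r : ℕ) : Set G :=
  {x | ∃ l : List G, OkL S l ∧ l.length ≤ r ∧ x = l.prod}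

theorem ball_mono {S : Set G} {r r' : ℕ} (h : r ≤ r') : Ball S r ⊆ Ball S r' := by
  rintro x ⟨l, h1, h2, h3⟩; exact ⟨l, h1, h2.trans h, h3⟩

theorem okl_nil {S : Set G} : OkL S [] := fun u hu => absurd hu List.not_mem_nil

theorem one_mem_ball {S : Set G} {r : ℕ} : (1 : G) ∈ Ball S r :=
  ⟨[], okl_nil, by simp, by simp⟩

theorem ball_finite {S : Set G} (hS : S.Finite) (r : ℕ) : (Ball S r).Finite := by
  induction r with
  | zero =>
    apply Set.Finite.subset (Set.finite_singleton (1 : G))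
    rintro x ⟨l, _, h2, h3⟩
    have : l = [] := List.length_eq_zero_iff.mp (Nat.le_zero.mp h2)
    simp [this] at h3; simp [h3]
  | succ r ih =>
    apply Set.Finite.subset (((Set.finite_singleton (1:G)).union (((hS.union hS.inv)).mul ih)))
    rintro x ⟨l, h1, h2, h3⟩
    match l with
    | [] => left; simp at h3; simp [h3]
    | s :: t =>
      right
      refine ⟨s, ?_, t.prod, ⟨t, fun u hu => h1 u (List.mem_cons_of_mem s hu), ?_, rfl⟩, ?_⟩
      · rcases h1 s List.mem_cons_self with h | h
        · exact Or.inl h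
        · exact Or.inr (Set.mem_inv.mpr (by simpa using h))
      · exact Nat.succ_le_succ_iff.mp (by simpa using h2)
      · rw [h3, List.prod_cons]

theorem ball_covers {S : Set G} (hS : Subgroup.closure S = ⊤) (x : G) :
    ∃ r, x ∈ Ball S r := by
  suffices h : ∃ l : List G, OkL S l ∧ x = l.prod by
    obtain ⟨l, h1, h2⟩ := h
    exact ⟨l.length, l, h1, le_rfl, h2⟩
  have hx : x ∈ Subgroup.closure S := by rw [hS]; trivial
  induction hx using Subgroup.closure_induction with
  | mem s hs => exact ⟨[s], fun u hu => by simp at hu; subst hu; exact Or.inl hs, by simp⟩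
  | one => exact ⟨[], okl_nil, by simp⟩
  | mul a b _ _ iha ihb =>
    obtain ⟨la, ha1, ha2⟩ := iha
    obtain ⟨lb, hb1, hb2⟩ := ihb
    exact ⟨la ++ lb, fun u hu => by
      rcases List.mem_append.mp hu with h | h
      exacts [ha1 u h, hb1 u h], by rw [List.prod_append, ha2, hb2]⟩
  | inv a _ iha =>
    obtain ⟨la, ha1, ha2⟩ := iha
    refine ⟨(la.map (·⁻¹)).reverse, fun u hu => ?_, ?_⟩
    · simp only [List.mem_reverse, List.mem_map] at hu
      obtain ⟨v, hv, rfl⟩ := hu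
      rcases ha1 v hv with h | h
      · exact Or.inr (by simpa using h)
      · exact Or.inl h
    · rw [ha2, List.prod_inv_reverse]

theorem escape {S : Set G} (Y : Set G) :
    ∀ l : List G, OkL S l → ∀ z, z ∈ Y → z * l.prod ∉ Y →
      ∃ y, (y ∈ Y ∧ ∃ s, (s ∈ S ∨ s⁻¹ ∈ S) ∧ y * s ∉ Y) ∧
        ∃ m : List G, OkL S m ∧ m.length ≤ l.length ∧ z = y * m.prod := by
  intro l
  induction l with
  | nil =>
    intro _ z hz hnz
    exact absurd (by simpa using hz) (by simpa using hnz)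
  | cons s t ih =>
    intro hok z hz hnz
    by_cases hzs : z * s ∈ Y
    · have hok' : OkL S t := fun u hu => hok u (List.mem_cons_of_mem s hu)
      have hnz' : (z * s) * t.prod ∉ Y := by
        rw [mul_assoc, ← List.prod_cons]; exact hnz
      obtain ⟨y, hy, m, hm1, hm2, hm3⟩ := ih hok' (z * s) hzs hnz'
      refine ⟨y, hy, m ++ [s⁻¹], ?_, ?_, ?_⟩
      · intro u hu
        rcases List.mem_append.mp hu with h | h
        · exact hm1 u h
        · simp at h; subst h
          rcases hok s List.mem_cons_self with h' | h'
          · exact Or.inr (by simpa using h')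
          · exact Or.inl h'
      · simpa using Nat.succ_le_succ hm2
      · rw [List.prod_append]
        simp only [List.prod_cons, List.prod_nil]
        have : z * s = y * m.prod := hm3
        calc z = (z * s) * s⁻¹ := by group
        _ = y * m.prod * s⁻¹ := by rw [this]
        _ = y * (m.prod * (s⁻¹ * 1)) := by group
    · exact ⟨z, ⟨hz, s, hok s List.mem_cons_self, hzs⟩, [],
        okl_nil, by simp, by simp⟩

theorem hfin_biUnion {α : Type*} {H : Subgroup G} {T : Set α} (hT : T.Finite)
    {D : α → Set G} : (∀ s ∈ T, HFin H (D s)) → HFin H (⋃ s ∈ T, D s) := by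
  refine Set.Finite.induction_on
    (motive := fun T _ => (∀ s ∈ T, HFin H (D s)) → HFin H (⋃ s ∈ T, D s)) T hT
    (fun _ => by simpa using hfin_empty H) ?_
  intro a s _ _ ih h
  rw [Set.biUnion_insert]
  exact hfin_union (h a (Set.mem_insert a s))
    (ih fun u hu => h u (Set.mem_insert_of_mem a hu))
end Ball

section Core
variable {G : Type*} [Group G]

theorem core2 (hG : Group.FG G) (H K : Subgroup G) (V Y Z : Set G)
    (hVinv : ∀ h ∈ H, h • V = V) (hVnf : ¬ HFin H V)
    (hYai : AlmostInv K Y) (hZY : Z ⊆ Y)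
    (hsmall : HFin H Z) (hVY : HFin H (V ∩ Y)) : HFin K Z := by
  classical
  obtain ⟨S, hScl, hSfin⟩ := Group.fg_iff.mp hG
  by_cases hA : ∀ r : ℕ, ∃ z ∈ Z, ∀ w ∈ Ball S r, z * w ∈ Y
  · exfalso
    apply hVnf
    obtain ⟨F, hF⟩ := hsmall
    obtain ⟨F₂, hF₂⟩ := hVY
    refine ⟨F₂, fun x hx => ?_⟩
    have hch : ∀ f : G, ∃ r, f⁻¹ * x ∈ Ball S r := fun f => ball_covers hScl _
    choose ρ hρ using hch
    obtain ⟨z, hzZ, hdeep⟩ := hA (F.sup ρ)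
    obtain ⟨h, hh, f, hf, hzhf⟩ := hF hzZ
    have hzhf' : h * f = z := hzhf
    have hball : f⁻¹ * x ∈ Ball S (F.sup ρ) := ball_mono (Finset.le_sup hf) (hρ f)
    have h1 : z * (f⁻¹ * x) ∈ Y := hdeep _ hball
    have h2 : z * (f⁻¹ * x) = h * x := by rw [← hzhf']; group
    have h3 : h * x ∈ V := by
      rw [← hVinv h hh]
      exact ⟨x, hx, rfl⟩
    have h4 : h * x ∈ (H : Set G) * (F₂ : Set G) := hF₂ ⟨h3, h2 ▸ h1⟩
    obtain ⟨h₂, hh₂, f₂, hf₂, he⟩ := h4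
    have he' : h₂ * f₂ = h * x := he
    refine ⟨h⁻¹ * h₂, H.mul_mem (H.inv_mem hh) hh₂, f₂, hf₂, ?_⟩
    show (h⁻¹ * h₂) * f₂ = x
    rw [mul_assoc, he']; group
  · push_neg at hA
    obtain ⟨r, hr⟩ := hA
    set bd : Set G := {y | y ∈ Y ∧ ∃ s, (s ∈ S ∨ s⁻¹ ∈ S) ∧ y * s ∉ Y} with hbddef
    have hbd : HFin K bd := by
      have hsub : bd ⊆ ⋃ s ∈ (S ∪ S⁻¹ : Set G), (Y \ (· * s⁻¹) '' Y) := by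
        rintro y ⟨hy, s, hs, hys⟩
        have hsT : s ∈ (S ∪ S⁻¹ : Set G) := by
          rcases hs with h | h
          · exact Or.inl h
          · exact Or.inr (Set.mem_inv.mpr (by simpa using h))
        refine Set.mem_biUnion hsT ⟨hy, fun hmem => ?_⟩
        obtain ⟨y', hy', hy'e⟩ := hmem
        have hyse : y * s = y' := by
          have h5 : y' * s⁻¹ = y := hy'e
          rw [← h5]; group
        exact hys (hyse ▸ hy')
      refine hfin_mono hsub (hfin_biUnion (hSfin.union hSfin.inv) ?_)
      intro s _
      exact hfin_mono Set.subset_union_left (hYai.2 s⁻¹)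
    obtain ⟨F₃, hF₃⟩ := hbd
    have hBfin : ((F₃ : Set G) * Ball S r).Finite :=
      (F₃.finite_toSet.mul (ball_finite hSfin r))
    refine ⟨hBfin.toFinset, fun z hzZ => ?_⟩
    obtain ⟨w, hw, hnz⟩ := hr z hzZ
    obtain ⟨l, hlok, hll, rfl⟩ := hw
    obtain ⟨y, hybd, m, hmok, hml, hzm⟩ := escape Y l hlok z (hZY hzZ) hnz
    obtain ⟨k, hk, f₃, hf₃, hkf⟩ := hF₃ hybd
    have hkf' : k * f₃ = y := hkf
    refine ⟨k, hk, f₃ * m.prod, ?_, ?_⟩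
    · rw [Finset.mem_coe, Set.Finite.mem_toFinset]
      exact Set.mul_mem_mul hf₃ ⟨m, hmok, hml.trans hll, rfl⟩
    · show k * (f₃ * m.prod) = z
      rw [← mul_assoc, hkf', ← hzm]
end Core

section Small
variable {G : Type*} [Group G] {ι : Type*} (H : ι → Subgroup G) (X : ι → Set G)

/-- `W` is small over every representation of `Q`. -/
def SAll (Q W : Set G) : Prop :=
  ∀ (j : ι) (g : G), (Q = g • X j ∨ Q = (g • X j)ᶜ) → HFin (H j) (g⁻¹ • W)

variable {H X}

theorem sAll_mono {Q W W' : Set G} (hsub : W' ⊆ W) (h : SAll H X Q W) : SAll H X Q W' :=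
  fun j g hrep => hfin_mono (Set.smul_set_mono hsub) (h j g hrep)

theorem sAll_union {Q A B : Set G} (hA : SAll H X Q A) (hB : SAll H X Q B) :
    SAll H X Q (A ∪ B) := fun j g hrep => by
  rw [Set.smul_set_union]
  exact hfin_union (hA j g hrep) (hB j g hrep)

theorem sAll_smallFor {Q W : Set G} (hQ : Q ∈ ESet X) (h : SAll H X Q W) :
    SmallFor H X Q W := by
  obtain ⟨j, g, hrep⟩ := hQ
  exact ⟨j, g, hrep, h j g hrep⟩

theorem small_mono {U W W' : Set G} (hsub : W' ⊆ W) (h : SmallFor H X U W) :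
    SmallFor H X U W' := by
  obtain ⟨i, g, hrep, hf⟩ := h
  exact ⟨i, g, hrep, hfin_mono (Set.smul_set_mono hsub) hf⟩

theorem small_empty' {U : Set G} (hU : U ∈ ESet X) : SmallFor H X U (∅ : Set G) := by
  obtain ⟨i, g, hrep⟩ := hU
  exact ⟨i, g, hrep, by rw [Set.smul_set_empty]; exact hfin_empty _⟩

theorem not_small_self (hnt : ∀ i, NontrivAI (H i) (X i)) {U : Set G}
    (h : SmallFor H X U U) : False := by
  obtain ⟨i, g, hrep, hf⟩ := h
  rcases hrep with he | he
  · rw [he, inv_smul_smul] at hf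
    exact (hnt i).2.1 hf
  · rw [he, ← smul_set_compl', inv_smul_smul] at hf
    exact (hnt i).2.2 hf

theorem not_small_compl (hnt : ∀ i, NontrivAI (H i) (X i)) {U : Set G}
    (h : SmallFor H X U Uᶜ) : False := by
  obtain ⟨i, g, hrep, hf⟩ := h
  rcases hrep with he | he
  · rw [he, ← smul_set_compl', inv_smul_smul] at hf
    exact (hnt i).2.2 hf
  · rw [he, compl_compl, inv_smul_smul] at hf
    exact (hnt i).2.1 hf

theorem notfin_of_rep {i : ι} (hnt : NontrivAI (H i) (X i)) {V : Set G} {g : G}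
    (hrep : V = g • X i ∨ V = (g • X i)ᶜ) : ¬ HFin (cj g (H i)) V := by
  intro hf
  rw [hfin_cj_iff] at hf
  rcases hrep with he | he
  · rw [he, inv_smul_smul] at hf
    exact hnt.2.1 hf
  · rw [he, ← smul_set_compl', inv_smul_smul] at hf
    exact hnt.2.2 hf

theorem inv_of_rep {i : ι} (hai : AlmostInv (H i) (X i)) {V : Set G} {g : G}
    (hrep : V = g • X i ∨ V = (g • X i)ᶜ) : ∀ h ∈ cj g (H i), h • V = V :=
  (ai_of_rep hai hrep).1

theorem coreTriple (hG : Group.FG G) (hnt : ∀ i, NontrivAI (H i) (X i))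
    {V' Y Z : Set G} {j k : ι} {g₀ g₁ : G}
    (hrepV : V' = g₀ • X j ∨ V' = (g₀ • X j)ᶜ)
    (hrepY : Y = g₁ • X k ∨ Y = (g₁ • X k)ᶜ)
    (hZY : Z ⊆ Y)
    (hsm : HFin (H j) (g₀⁻¹ • Z))
    (hVY : HFin (H j) (g₀⁻¹ • (V' ∩ Y))) :
    HFin (H k) (g₁⁻¹ • Z) := by
  rw [← hfin_cj_iff]
  exact core2 hG (cj g₀ (H j)) (cj g₁ (H k)) V' Y Z
    (inv_of_rep (hnt j).1 hrepV) (notfin_of_rep (hnt j) hrepV)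
    (ai_of_rep (hnt k).1 hrepY) hZY
    ((hfin_cj_iff g₀).mpr hsm) ((hfin_cj_iff g₀).mpr hVY)

theorem rep_or {A P : Set G} {i : ι} {g : G} (hA : A = P ∨ A = Pᶜ)
    (hP : P = g • X i ∨ P = (g • X i)ᶜ) : A = g • X i ∨ A = (g • X i)ᶜ := by
  rcases hA with rfl | rfl
  · exact hP
  · rcases hP with rfl | he
    · exact Or.inr rfl
    · exact Or.inl (by rw [he, compl_compl])

theorem transferStrong (hG : Group.FG G) (hnt : ∀ i, NontrivAI (H i) (X i))
    {P Q U' V' : Set G}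
    (hU' : U' = P ∨ U' = Pᶜ) (hV' : V' = Q ∨ V' = Qᶜ)
    (hsm : SmallFor H X P (U' ∩ V')) : SAll H X Q (U' ∩ V') := by
  obtain ⟨i, g, hrepP, hfin⟩ := hsm
  intro j g' hrepQ
  exact coreTriple hG hnt (rep_or hU' hrepP) (rep_or hV' hrepQ)
    Set.inter_subset_right hfin hfin

theorem transfer (hG : Group.FG G) (hnt : ∀ i, NontrivAI (H i) (X i))
    {P Q U' V' : Set G} (hQ : Q ∈ ESet X)
    (hU' : U' = P ∨ U' = Pᶜ) (hV' : V' = Q ∨ V' = Qᶜ)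
    (hsm : SmallFor H X P (U' ∩ V')) : SmallFor H X Q (U' ∩ V') :=
  sAll_smallFor hQ (transferStrong hG hnt hU' hV' hsm)
end Small


section SetHelpers
variable {α : Type*}

theorem hset1 {A B : Set α} (h : A ∩ B = ∅) : A ∩ Bᶜ = A := by
  ext x
  simp only [Set.mem_inter_iff, Set.mem_compl_iff]
  constructor
  · exact fun h' => h'.1
  · intro hx
    exact ⟨hx, fun hb => Set.eq_empty_iff_forall_notMem.mp h x ⟨hx, hb⟩⟩

theorem hset2 {A B : Set α} (h : Aᶜ ∩ B = ∅) : B ⊆ A := fun x hx => by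
  by_contra hc
  exact Set.eq_empty_iff_forall_notMem.mp h x ⟨hc, hx⟩

theorem hset3 {A B : Set α} (h : Aᶜ ∩ Bᶜ = ∅) : A ∩ Bᶜ = Bᶜ := by
  ext x
  simp only [Set.mem_inter_iff, Set.mem_compl_iff]
  constructor
  · exact fun h' => h'.2
  · intro hx
    refine ⟨?_, hx⟩
    by_contra hc
    exact Set.eq_empty_iff_forall_notMem.mp h x ⟨hc, hx⟩

theorem hsub_split {A B C : Set α} : A ∩ Cᶜ ⊆ (A ∩ Bᶜ) ∪ (B ∩ Cᶜ) := fun x hx => by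
  by_cases hb : x ∈ B
  · exact Or.inr ⟨hb, hx.2⟩
  · exact Or.inl ⟨hx.1, hb⟩

theorem hsubOf {A B : Set α} (h : A ∩ Bᶜ = ∅) : A ⊆ B := fun x hx => by
  by_contra hc
  exact Set.eq_empty_iff_forall_notMem.mp h x ⟨hx, hc⟩

theorem hsubTo {A B : Set α} (h : A ⊆ B) : A ∩ Bᶜ = ∅ :=
  Set.eq_empty_iff_forall_notMem.mpr fun x hx => hx.2 (h hx.1)
end SetHelpers

/-- If the family `X₁,…,Xₙ` is in good position, then almost inclusion is a partial
order on `E(X₁,…,Xₙ)`. -/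
theorem almost_inclusion_is_partial_order
    {G : Type*} [Group G] (hG : Group.FG G) {n : ℕ}
    (H : Fin n → Subgroup G) (hfg : ∀ i, (H i).FG)
    (X : Fin n → Set G) (hnt : ∀ i, NontrivAI (H i) (X i))
    (hgp : GoodPos H X) :
    (∀ U ∈ ESet X, LeE H X U U) ∧
    (∀ U ∈ ESet X, ∀ V ∈ ESet X, LeE H X U V → LeE H X V U → U = V) ∧
    (∀ U ∈ ESet X, ∀ V ∈ ESet X, ∀ W ∈ ESet X,
      LeE H X U V → LeE H X V W → LeE H X U W) := by
  refine ⟨?_, ?_, ?_⟩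
  · -- reflexivity
    intro U _
    exact Or.inl (Set.inter_compl_self U)
  · -- antisymmetry
    intro U hU V hV h1 h2
    rcases h1 with h1 | ⟨s1, _, n1b, _⟩
    · rcases h2 with h2 | ⟨_, _, n2b, _⟩
      · exact Set.Subset.antisymm (hsubOf h1) (hsubOf h2)
      · exfalso
        apply n2b
        rw [Set.inter_comm, h1]
        exact small_empty' hV
    · rcases h2 with h2 | ⟨_, _, n2b, _⟩
      · exfalso
        apply n1b
        rw [Set.inter_comm, h2]
        exact small_empty' hU
      · exfalso
        apply n2b
        rw [Set.inter_comm]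
        exact transfer hG hnt hV (Or.inl rfl) (Or.inr rfl) s1
  · -- transitivity
    intro U hU V hV W hW h1 h2
    by_cases hUW : U ∩ Wᶜ = ∅
    · exact Or.inl hUW
    rcases h1 with h1 | ⟨s1, n1a, n1b, n1c⟩
    · have hUV : U ⊆ V := hsubOf h1
      rcases h2 with h2 | ⟨s2, n2a, n2b, n2c⟩
      · exact absurd (hsubTo ((hsubOf h1).trans (hsubOf h2))) hUW
      · -- case 2 : U ⊆ V, branch2 (V,W)
        have aW : SAll H X W (V ∩ Wᶜ) :=
          transferStrong hG hnt (Or.inl rfl) (Or.inr rfl) s2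
        have aWU : SAll H X W (U ∩ Wᶜ) :=
          sAll_mono (Set.inter_subset_inter hUV Set.Subset.rfl) aW
        have sfW : SmallFor H X W (U ∩ Wᶜ) := sAll_smallFor hW aWU
        have sUW : SmallFor H X U (U ∩ Wᶜ) := by
          have h' : SmallFor H X W (Wᶜ ∩ U) := by rwa [Set.inter_comm] at sfW
          have h'' := transfer hG hnt hU (Or.inr rfl) (Or.inl rfl) h'
          rwa [Set.inter_comm] at h''
        refine Or.inr ⟨sUW, ?_, ?_, ?_⟩
        · intro hsm
          rcases hgp U hU W hW 0 1 (by decide) hsm sUW with e | e | e | e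
          · exact not_small_self hnt (by rwa [hset1 e] at sUW)
          · exact hUW e
          · have hWU : W ⊆ U := hset2 e
            have c1 : SAll H X W (U ∩ W) :=
              transferStrong hG hnt (Or.inl rfl) (Or.inl rfl) hsm
            have c2 : SAll H X W (W ∩ V) :=
              sAll_mono (fun x hx => Set.mem_inter (hWU hx.1) hx.1) c1
            have c3 : SmallFor H X V (W ∩ V) :=
              transfer hG hnt hV (Or.inl rfl) (Or.inl rfl) (sAll_smallFor hW c2)
            exact n2a (by rwa [Set.inter_comm] at c3)
          · exact not_small_compl hnt (by rwa [hset3 e] at sfW)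
        · intro hsm
          rcases hgp U hU W hW 2 1 (by decide) hsm sUW with e | e | e | e
          · exact not_small_self hnt (by rwa [hset1 e] at sUW)
          · exact hUW e
          · have hVcW : Vᶜ ∩ W = ∅ := by
              rw [← Set.subset_empty_iff, ← e]
              exact Set.inter_subset_inter (Set.compl_subset_compl.mpr hUV) Set.Subset.rfl
            exact n2b (by rw [hVcW]; exact small_empty' hV)
          · have hVcWc : Vᶜ ∩ Wᶜ = ∅ := by
              rw [← Set.subset_empty_iff, ← e]
              exact Set.inter_subset_inter (Set.compl_subset_compl.mpr hUV) Set.Subset.rfl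
            exact n2c (by rw [hVcWc]; exact small_empty' hV)
        · intro hsm
          rcases hgp U hU W hW 3 1 (by decide) hsm sUW with e | e | e | e
          · exact not_small_self hnt (by rwa [hset1 e] at sUW)
          · exact hUW e
          · have hVcW : Vᶜ ∩ W = ∅ := by
              rw [← Set.subset_empty_iff, ← e]
              exact Set.inter_subset_inter (Set.compl_subset_compl.mpr hUV) Set.Subset.rfl
            exact n2b (by rw [hVcW]; exact small_empty' hV)
          · have hVcWc : Vᶜ ∩ Wᶜ = ∅ := by
              rw [← Set.subset_empty_iff, ← e]
              exact Set.inter_subset_inter (Set.compl_subset_compl.mpr hUV) Set.Subset.rfl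
            exact n2c (by rw [hVcWc]; exact small_empty' hV)
    · rcases h2 with h2 | ⟨s2, n2a, n2b, n2c⟩
      · -- case 3 : branch2 (U,V), V ⊆ W
        have hVW : V ⊆ W := hsubOf h2
        have hWc : Wᶜ ⊆ Vᶜ := Set.compl_subset_compl.mpr hVW
        have sUW : SmallFor H X U (U ∩ Wᶜ) :=
          small_mono (Set.inter_subset_inter Set.Subset.rfl hWc) s1
        refine Or.inr ⟨sUW, ?_, ?_, ?_⟩
        · intro hsm
          rcases hgp U hU W hW 0 1 (by decide) hsm sUW with e | e | e | e
          · have hUV0 : U ∩ V = ∅ := by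
              rw [← Set.subset_empty_iff, ← e]
              exact Set.inter_subset_inter Set.Subset.rfl hVW
            exact n1a (by rw [hUV0]; exact small_empty' hU)
          · exact hUW e
          · have hUcV : Uᶜ ∩ V = ∅ := by
              rw [← Set.subset_empty_iff, ← e]
              exact Set.inter_subset_inter Set.Subset.rfl hVW
            exact n1b (by rw [hUcV]; exact small_empty' hU)
          · have c1 : SmallFor H X W (U ∩ Wᶜ) :=
              transfer hG hnt hW (Or.inl rfl) (Or.inr rfl) sUW
            exact not_small_compl hnt (by rwa [hset3 e] at c1)
        · intro hsm
          exact n1b (small_mono (Set.inter_subset_inter Set.Subset.rfl hVW) hsm)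
        · intro hsm
          rcases hgp U hU W hW 3 1 (by decide) hsm sUW with e | e | e | e
          · have hUV0 : U ∩ V = ∅ := by
              rw [← Set.subset_empty_iff, ← e]
              exact Set.inter_subset_inter Set.Subset.rfl hVW
            exact n1a (by rw [hUV0]; exact small_empty' hU)
          · exact hUW e
          · have hUcV : Uᶜ ∩ V = ∅ := by
              rw [← Set.subset_empty_iff, ← e]
              exact Set.inter_subset_inter Set.Subset.rfl hVW
            exact n1b (by rw [hUcV]; exact small_empty' hU)
          · have c1 : SmallFor H X W (U ∩ Wᶜ) :=
              transfer hG hnt hW (Or.inl rfl) (Or.inr rfl) sUW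
            exact not_small_compl hnt (by rwa [hset3 e] at c1)
      · -- case 4 : branch2 (U,V) and branch2 (V,W)
        have aV1 : SAll H X V (U ∩ Vᶜ) :=
          transferStrong hG hnt (Or.inl rfl) (Or.inr rfl) s1
        have aW2 : SAll H X W (V ∩ Wᶜ) :=
          transferStrong hG hnt (Or.inl rfl) (Or.inr rfl) s2
        have sfW2 : SmallFor H X W (V ∩ Wᶜ) := sAll_smallFor hW aW2
        have aV2 : SAll H X V (V ∩ Wᶜ) := by
          have h' : SmallFor H X W (Wᶜ ∩ V) := by rwa [Set.inter_comm] at sfW2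
          have h'' := transferStrong hG hnt (Or.inr rfl) (Or.inl rfl) h'
          rwa [Set.inter_comm Wᶜ V] at h''
        have aV : SAll H X V (U ∩ Wᶜ) := sAll_mono hsub_split (sAll_union aV1 aV2)
        obtain ⟨j, g₀, hrepV⟩ := id hV
        obtain ⟨k, g₁, hrepW⟩ := id hW
        have hsmallV : HFin (H j) (g₀⁻¹ • (U ∩ Wᶜ)) := aV j g₀ hrepV
        have hVY : HFin (H j) (g₀⁻¹ • (V ∩ Wᶜ)) := aV2 j g₀ hrepV
        have hrepWc : Wᶜ = g₁ • X k ∨ Wᶜ = (g₁ • X k)ᶜ := rep_or (Or.inr rfl) hrepW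
        have hKfin : HFin (H k) (g₁⁻¹ • (U ∩ Wᶜ)) :=
          coreTriple hG hnt hrepV hrepWc Set.inter_subset_right hsmallV hVY
        have sfW : SmallFor H X W (U ∩ Wᶜ) := ⟨k, g₁, hrepW, hKfin⟩
        have sUW : SmallFor H X U (U ∩ Wᶜ) := by
          have h' : SmallFor H X W (Wᶜ ∩ U) := by rwa [Set.inter_comm] at sfW
          have h'' := transfer hG hnt hU (Or.inr rfl) (Or.inl rfl) h'
          rwa [Set.inter_comm] at h''
        refine Or.inr ⟨sUW, ?_, ?_, ?_⟩
        · intro hsm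
          rcases hgp U hU W hW 0 1 (by decide) hsm sUW with e | e | e | e
          · exact not_small_self hnt (by rwa [hset1 e] at sUW)
          · exact hUW e
          · have hWU : W ⊆ U := hset2 e
            have c1 : SAll H X W (U ∩ W) :=
              transferStrong hG hnt (Or.inl rfl) (Or.inl rfl) hsm
            have c2 : SAll H X W (W ∩ V) :=
              sAll_mono (fun x hx => Set.mem_inter (hWU hx.1) hx.1) c1
            have c3 : SmallFor H X V (W ∩ V) :=
              transfer hG hnt hV (Or.inl rfl) (Or.inl rfl) (sAll_smallFor hW c2)
            exact n2a (by rwa [Set.inter_comm] at c3)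
          · exact not_small_compl hnt (by rwa [hset3 e] at sfW)
        · intro hsm
          rcases hgp U hU W hW 2 1 (by decide) hsm sUW with e | e | e | e
          · exact not_small_self hnt (by rwa [hset1 e] at sUW)
          · exact hUW e
          · have hWU : W ⊆ U := hset2 e
            have hsub : Uᶜ ∩ V ⊆ V ∩ Wᶜ := fun x hx => Set.mem_inter hx.2 fun hw => hx.1 (hWU hw)
            have c2 : SmallFor H X V (Uᶜ ∩ V) := sAll_smallFor hV (sAll_mono hsub aV2)
            have c3 : SmallFor H X V (V ∩ Uᶜ) := by rwa [Set.inter_comm] at c2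
            have c4 : SmallFor H X U (V ∩ Uᶜ) :=
              transfer hG hnt hU (Or.inl rfl) (Or.inr rfl) c3
            exact n1b (by rwa [Set.inter_comm] at c4)
          · exact not_small_compl hnt (by rwa [hset3 e] at sfW)
        · intro hsm
          rcases hgp U hU W hW 3 1 (by decide) hsm sUW with e | e | e | e
          · exact not_small_self hnt (by rwa [hset1 e] at sUW)
          · exact hUW e
          · have hWU : W ⊆ U := hset2 e
            have hsub : Uᶜ ∩ V ⊆ V ∩ Wᶜ := fun x hx => Set.mem_inter hx.2 fun hw => hx.1 (hWU hw)
            have c2 : SmallFor H X V (Uᶜ ∩ V) := sAll_smallFor hV (sAll_mono hsub aV2)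
            have c3 : SmallFor H X V (V ∩ Uᶜ) := by rwa [Set.inter_comm] at c2
            have c4 : SmallFor H X U (V ∩ Uᶜ) :=
              transfer hG hnt hU (Or.inl rfl) (Or.inr rfl) c3
            exact n1b (by rwa [Set.inter_comm] at c4)
          · exact not_small_compl hnt (by rwa [hset3 e] at sfW)
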